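/- Let p be a prime, q a positive integer divisible by p, m ≥ 3, 0 ≤ δ < m, and let the functions a^t_σ be defined as in the stated construction. Let t₁, t₂ ∈ {0,…,p^{k+δ}−1}, σ ∈ {0,…,p^k−1}, and let r, s ∈ {0,…,p^m−1} have p-ary digits (r_1,…,r_m), (s_1,…,s_m). Suppose there exist β̂ ∈ {1,…,k} and γ̂ ∈ {2,…,m_{β̂}} such that r_{π_{β̂}(γ)} = s_{π_{β̂}(γ)} for all 1 ≤ γ < γ̂ and r_{π_{β̂}(γ̂)} ≠ s_{π_{β̂}(γ̂)}. For 1 ≤ j ≤ p−1, let r^j and s^j be the integers in {0,…,p^m−1} whose p-ary digits agree with those of r and s respectively, except that the digit in position π_{β̂}(γ̂−1) is replaced by (that digit − j) mod p. Then ω_q^{a^{t₁}_{σ,r} − a^{t₂}_{σ,s}} + Σ_{j=1}^{p−1} ω_q^{a^{t₁}_{σ,r^j} − a^{t₂}_{σ,s^j}} = 0. -/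

import Mathlib

open Finset

/-- `i`-th (1-based) base-`p` digit of `r`, i.e. `r_i` where `r = Σ_i r_i p^(i-1)`. -/
def dig (p r i : ℕ) : ℕ := r / p ^ (i - 1) % p

/-- `ω_q^x = exp(2π√-1·x/q)` for `x ∈ ℤ_q`. -/
noncomputable def eomega (q : ℕ) (x : ZMod q) : ℂ :=
  Complex.exp (2 * Real.pi * Complex.I * (x.val : ℂ) / (q : ℂ))

/-- Aperiodic cross-correlation of two length-`N` `ℤ_q`-valued sequences at integer shift `τ`. -/
noncomputable def ccorr (q N : ℕ) (u v : ℕ → ZMod q) (τ : ℤ) : ℂ :=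
  if 0 ≤ τ then ∑ i ∈ Finset.range (N - τ.toNat), eomega q (u i - v (i + τ.toNat))
  else ∑ i ∈ Finset.range (N - (-τ).toNat), eomega q (u (i + (-τ).toNat) - v i)

/-- Aperiodic autocorrelation. -/
noncomputable def acorr (q N : ℕ) (u : ℕ → ZMod q) (τ : ℤ) : ℂ := ccorr q N u u τ

/-- Entry `a^t_{σ,r}` of the construction: with `(r_1,…,r_m)` the `p`-ary digits of `r`,
`a^t_σ(r) = (q/p) Σ_β Σ_γ r_{π_β(γ)} r_{π_β(γ+1)} + Σ_l λ_l r_l + λ_0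
 + (q/p)(Σ_β σ_β r_{π_β(1)} + Σ_β t_β r_{π_β(m_β)} + Σ_β t_{k+β} r_{m-δ+β})`. -/
def aseq (p q m δ k : ℕ) (mcard : ℕ → ℕ) (pmap : ℕ → ℕ → ℕ) (lam : ℕ → ZMod q)
    (t σ r : ℕ) : ZMod q :=
  (((q / p) * ∑ β ∈ Finset.Icc 1 k, ∑ γ ∈ Finset.Icc 1 (mcard β - 1),
      dig p r (pmap β γ) * dig p r (pmap β (γ + 1)) : ℕ) : ZMod q)
  + ∑ l ∈ Finset.Icc 1 m, lam l * (dig p r l : ZMod q) + lam 0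
  + (((q / p) * (∑ β ∈ Finset.Icc 1 k, dig p σ β * dig p r (pmap β 1)
      + ∑ β ∈ Finset.Icc 1 k, dig p t β * dig p r (pmap β (mcard β))
      + ∑ β ∈ Finset.Icc 1 δ, dig p t (k + β) * dig p r (m - δ + β)) : ℕ) : ZMod q)

lemma eomega_eq_pow (q : ℕ) (x : ZMod q) :
    eomega q x = Complex.exp (2 * Real.pi * Complex.I / q) ^ x.val := by
  rw [eomega, ← Complex.exp_nat_mul]
  congr 1; ring

lemma zeta_pow_q {q : ℕ} (hq : 0 < q) :
    Complex.exp (2 * Real.pi * Complex.I / q) ^ q = 1 := by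
  rw [← Complex.exp_nat_mul]
  have hq' : (q : ℂ) ≠ 0 := Nat.cast_ne_zero.mpr hq.ne'
  have : (q : ℂ) * (2 * Real.pi * Complex.I / q) = 2 * Real.pi * Complex.I := by
    field_simp
  rw [this, Complex.exp_two_pi_mul_I]

lemma eomega_add {q : ℕ} (hq : 0 < q) (x y : ZMod q) :
    eomega q (x + y) = eomega q x * eomega q y := by
  haveI : NeZero q := ⟨hq.ne'⟩
  rw [eomega_eq_pow, eomega_eq_pow, eomega_eq_pow, ← pow_add, ZMod.val_add]
  conv_rhs => rw [← Nat.mod_add_div (x.val + y.val) q, pow_add, pow_mul, zeta_pow_q hq,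
    one_pow, mul_one]

lemma eomega_zero {q : ℕ} (hq : 0 < q) : eomega q 0 = 1 := by
  haveI : NeZero q := ⟨hq.ne'⟩
  rw [eomega_eq_pow, ZMod.val_zero, pow_zero]

lemma eomega_nsmul {q : ℕ} (hq : 0 < q) (n : ℕ) (x : ZMod q) :
    eomega q (n • x) = eomega q x ^ n := by
  induction n with
  | zero => simpa using eomega_zero hq
  | succ n ih => rw [succ_nsmul, eomega_add hq, ih, pow_succ]

lemma eomega_ne_one {q : ℕ} (hq : 0 < q) {x : ZMod q} (hx : x ≠ 0) :
    eomega q x ≠ 1 := by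
  haveI : NeZero q := ⟨hq.ne'⟩
  intro h
  rw [eomega, Complex.exp_eq_one_iff] at h
  obtain ⟨n, hn⟩ := h
  have hq' : (q : ℂ) ≠ 0 := Nat.cast_ne_zero.mpr hq.ne'
  have hpi : (2 * Real.pi * Complex.I : ℂ) ≠ 0 := by
    simp [Complex.I_ne_zero, Real.pi_ne_zero, Complex.ofReal_ne_zero]
  rw [div_eq_iff hq'] at hn
  have hv : (x.val : ℂ) = n * q := by
    have h2 : (2 * Real.pi * Complex.I : ℂ) * (x.val : ℂ)
        = (2 * Real.pi * Complex.I : ℂ) * ((n : ℂ) * q) := by linear_combination hn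
    exact mul_left_cancel₀ hpi h2
  have hvz : (x.val : ℤ) = n * q := by exact_mod_cast hv
  have : (q : ℤ) ∣ (x.val : ℤ) := ⟨n, by linarith⟩
  have hdvd : q ∣ x.val := by exact_mod_cast this
  have hvpos : 0 < x.val := by
    rcases Nat.eq_zero_or_pos x.val with h0 | h0
    · exact absurd ((ZMod.val_eq_zero x).mp h0) hx
    · exact h0
  exact absurd (Nat.le_of_dvd hvpos hdvd) (not_le.mpr (ZMod.val_lt x))

/-- suppose `β̂ ∈ {1,…,k}` and `γ̂ ∈ {2,…,m_β̂}` satisfy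
`r_{π_β̂(γ)} = s_{π_β̂(γ)}` for all `1 ≤ γ < γ̂` and `r_{π_β̂(γ̂)} ≠ s_{π_β̂(γ̂)}`;
for `1 ≤ j ≤ p-1` let `r^j, s^j` agree with `r, s` in all digit positions except
`π_β̂(γ̂-1)`, where the digit is decreased by `j` modulo `p`.  Then
`ω_q^{a^{t₁}_{σ,r} - a^{t₂}_{σ,s}} + Σ_{j=1}^{p-1} ω_q^{a^{t₁}_{σ,r^j} - a^{t₂}_{σ,s^j}} = 0`. -/
theorem szccs_case_two_sum_zero
    (p q m δ k : ℕ) (hp : p.Prime) (hq : 0 < q) (hpq : p ∣ q)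
    (hm : 3 ≤ m) (hδ : δ < m) (hk1 : 1 ≤ k) (hk2 : k ≤ m - δ)
    (mcard : ℕ → ℕ) (pmap : ℕ → ℕ → ℕ) (lam : ℕ → ZMod q)
    (hmcard : ∀ β ∈ Finset.Icc 1 k, 1 ≤ mcard β)
    (hmaps : ∀ β ∈ Finset.Icc 1 k, ∀ γ ∈ Finset.Icc 1 (mcard β),
      pmap β γ ∈ Finset.Icc 1 (m - δ))
    (hpart : ∀ l ∈ Finset.Icc 1 (m - δ), ∃! bg : ℕ × ℕ,
      bg.1 ∈ Finset.Icc 1 k ∧ bg.2 ∈ Finset.Icc 1 (mcard bg.1) ∧ pmap bg.1 bg.2 = l)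
    (t₁ t₂ : ℕ) (ht₁ : t₁ < p ^ (k + δ)) (ht₂ : t₂ < p ^ (k + δ))
    (σ : ℕ) (hσ : σ < p ^ k)
    (r s : ℕ) (hr : r < p ^ m) (hs : s < p ^ m)
    (b : ℕ) (hb : b ∈ Finset.Icc 1 k)
    (c : ℕ) (hc : 2 ≤ c ∧ c ≤ mcard b)
    (heq : ∀ γ, 1 ≤ γ → γ < c → dig p r (pmap b γ) = dig p s (pmap b γ))
    (hne : dig p r (pmap b c) ≠ dig p s (pmap b c))
    (r' s' : ℕ → ℕ)
    (hr' : ∀ j ∈ Finset.Icc 1 (p - 1), r' j < p ^ m ∧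
      ∀ i ∈ Finset.Icc 1 m, dig p (r' j) i =
        if i = pmap b (c - 1) then (dig p r i + p - j) % p else dig p r i)
    (hs' : ∀ j ∈ Finset.Icc 1 (p - 1), s' j < p ^ m ∧
      ∀ i ∈ Finset.Icc 1 m, dig p (s' j) i =
        if i = pmap b (c - 1) then (dig p s i + p - j) % p else dig p s i) :
    eomega q (aseq p q m δ k mcard pmap lam t₁ σ r
        - aseq p q m δ k mcard pmap lam t₂ σ s)
      + ∑ j ∈ Finset.Icc 1 (p - 1),
        eomega q (aseq p q m δ k mcard pmap lam t₁ σ (r' j)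
          - aseq p q m δ k mcard pmap lam t₂ σ (s' j)) = 0 := by

  haveI : NeZero q := ⟨hq.ne'⟩
  obtain ⟨hc2, hcm⟩ := hc
  obtain ⟨hb1, hbk⟩ := Finset.mem_Icc.mp hb
  have hp2 := hp.two_le
  set l0 := pmap b (c - 1) with hl0
  have hc1m : c - 1 ∈ Finset.Icc 1 (mcard b) := Finset.mem_Icc.mpr ⟨by omega, by omega⟩
  have hcmem : c ∈ Finset.Icc 1 (mcard b) := Finset.mem_Icc.mpr ⟨by omega, by omega⟩
  have hl0mem : l0 ∈ Finset.Icc 1 (m - δ) := hmaps b hb _ hc1m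
  have hl0le : l0 ≤ m - δ := (Finset.mem_Icc.mp hl0mem).2
  have hsub : Finset.Icc 1 (m - δ) ⊆ Finset.Icc 1 m :=
    Finset.Icc_subset_Icc_right (by omega)
  have uniq : ∀ β ∈ Finset.Icc 1 k, ∀ γ ∈ Finset.Icc 1 (mcard β),
      pmap β γ = l0 → β = b ∧ γ = c - 1 := by
    intro β hβ γ hγ hpm
    obtain ⟨bg, -, hu⟩ := hpart l0 hl0mem
    have h1 := hu (β, γ) ⟨hβ, hγ, hpm⟩
    have h2 := hu (b, c - 1) ⟨hb, hc1m, rfl⟩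
    have h3 : (β, γ) = (b, c - 1) := h1.trans h2.symm
    exact ⟨congrArg Prod.fst h3, congrArg Prod.snd h3⟩
  have hequ : dig p r l0 = dig p s l0 := heq (c - 1) (by omega) (by omega)
  have hequc : ((dig p r l0 : ℕ) : ZMod q) = ((dig p s l0 : ℕ) : ZMod q) := by rw [hequ]
  have hpc_ne : pmap b c ≠ l0 := by
    intro h
    have := (uniq b hb c hcmem h).2
    omega
  have hpcmem : pmap b c ∈ Finset.Icc 1 m := hsub (hmaps b hb c hcmem)
  set c0 : ZMod q := ((q / p : ℕ) : ZMod q) with hc0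
  set R : ZMod q := ((dig p r (pmap b c) : ℕ) : ZMod q) with hR
  set S : ZMod q := ((dig p s (pmap b c) : ℕ) : ZMod q) with hS
  set E : ZMod q := c0 * (R - S) with hE
  have hc0p : c0 * ((p : ℕ) : ZMod q) = 0 := by
    rw [hc0, ← Nat.cast_mul, Nat.div_mul_cancel hpq, ZMod.natCast_self]
  have hdiglt : ∀ (x i : ℕ), dig p x i < p := fun x i => Nat.mod_lt _ (by omega)
  have hEne : E ≠ 0 := by
    rw [hE, hc0, hR, hS]
    intro h
    obtain ⟨w, hw⟩ := hpq
    have hwq : q / p = w := by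
      subst hw; exact Nat.mul_div_cancel_left w (by omega)
    rw [hwq] at h
    have h2 : (((w : ℤ) * ((dig p r (pmap b c) : ℤ) - (dig p s (pmap b c) : ℤ))
        : ℤ) : ZMod q) = 0 := by push_cast; linear_combination h
    rw [ZMod.intCast_zmod_eq_zero_iff_dvd] at h2
    have hqp : (q : ℤ) = (w : ℤ) * (p : ℤ) := by
      rw [hw]; push_cast; ring
    rw [hqp] at h2
    have hqppos : (0 : ℤ) < (w : ℤ) := by
      have : 0 < w := by
        rcases Nat.eq_zero_or_pos w with h0 | h0
        · subst h0; simp at hw; omega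
        · exact h0
      exact_mod_cast this
    have hpd : (p : ℤ) ∣ ((dig p r (pmap b c) : ℤ) - (dig p s (pmap b c) : ℤ)) :=
      (mul_dvd_mul_iff_left hqppos.ne').mp h2
    have hd1 : (dig p r (pmap b c) : ℤ) - (dig p s (pmap b c) : ℤ) ≠ 0 := by
      intro h0
      exact hne (by omega)
    have habs : (p : ℤ) ≤ |(dig p r (pmap b c) : ℤ) - (dig p s (pmap b c) : ℤ)| :=
      Int.le_of_dvd (abs_pos.mpr hd1) ((dvd_abs _ _).mpr hpd)
    have b1 : (dig p r (pmap b c) : ℤ) < p := by exact_mod_cast hdiglt r (pmap b c)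
    have b2 : (dig p s (pmap b c) : ℤ) < p := by exact_mod_cast hdiglt s (pmap b c)
    have b3 : (0:ℤ) ≤ (dig p r (pmap b c) : ℤ) := by positivity
    have b4 : (0:ℤ) ≤ (dig p s (pmap b c) : ℤ) := by positivity
    have hlt : |(dig p r (pmap b c) : ℤ) - (dig p s (pmap b c) : ℤ)| < p :=
      abs_sub_lt_iff.mpr ⟨by omega, by omega⟩
    exact absurd habs (not_le.mpr hlt)
  -- the key identity
  have key : ∀ j ∈ Finset.Icc 1 (p - 1),
      aseq p q m δ k mcard pmap lam t₁ σ (r' j) - aseq p q m δ k mcard pmap lam t₂ σ (s' j)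
        = (aseq p q m δ k mcard pmap lam t₁ σ r - aseq p q m δ k mcard pmap lam t₂ σ s)
          + (p - j) • E := by
    intro j hj
    obtain ⟨hj1, hj2⟩ := Finset.mem_Icc.mp hj
    obtain ⟨-, hrd⟩ := hr' j hj
    obtain ⟨-, hsd⟩ := hs' j hj
    have hrdig : ∀ i ∈ Finset.Icc 1 m, i ≠ l0 → dig p (r' j) i = dig p r i :=
      fun i hi h => by rw [hrd i hi, if_neg h]
    have hsdig : ∀ i ∈ Finset.Icc 1 m, i ≠ l0 → dig p (s' j) i = dig p s i :=
      fun i hi h => by rw [hsd i hi, if_neg h]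
    have hrl0 : dig p (r' j) l0 = (dig p r l0 + p - j) % p := by
      rw [hrd l0 (hsub hl0mem), if_pos rfl]
    have hsl0 : dig p (s' j) l0 = (dig p r l0 + p - j) % p := by
      rw [hsd l0 (hsub hl0mem), if_pos rfl, hequ]
    have digdiff : ∀ i ∈ Finset.Icc 1 m,
        ((dig p (r' j) i : ℕ) : ZMod q) - ((dig p (s' j) i : ℕ) : ZMod q)
          = ((dig p r i : ℕ) : ZMod q) - ((dig p s i : ℕ) : ZMod q) := by
      intro i hi
      by_cases h : i = l0
      · subst h
        rw [hrl0, hsl0, hequc, sub_self, sub_self]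
      · rw [hrdig i hi h, hsdig i hi h]
    -- the digit-shift identity
    have hkey : c0 * (((dig p r l0 + p - j) % p : ℕ) : ZMod q)
        = c0 * ((dig p r l0 : ℕ) : ZMod q) + c0 * (((p - j : ℕ)) : ZMod q) := by
      have h1 : (dig p r l0 + p - j) % p + p * ((dig p r l0 + p - j) / p)
          = dig p r l0 + (p - j) := by rw [Nat.mod_add_div]; omega
      have h2 := congrArg (fun n : ℕ => ((n : ℕ) : ZMod q)) h1
      push_cast at h2
      linear_combination c0 * h2 - (((dig p r l0 + p - j) / p : ℕ) : ZMod q) * hc0p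
    -- linear part
    have hL : (∑ l ∈ Finset.Icc 1 m, lam l * ((dig p (r' j) l : ℕ) : ZMod q))
        - ∑ l ∈ Finset.Icc 1 m, lam l * ((dig p (s' j) l : ℕ) : ZMod q)
        = (∑ l ∈ Finset.Icc 1 m, lam l * ((dig p r l : ℕ) : ZMod q))
          - ∑ l ∈ Finset.Icc 1 m, lam l * ((dig p s l : ℕ) : ZMod q) := by
      rw [← Finset.sum_sub_distrib, ← Finset.sum_sub_distrib]
      exact Finset.sum_congr rfl fun l hl => by rw [← mul_sub, ← mul_sub, digdiff l hl]
    -- generic boundary lemmas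
    have hgen : ∀ (T : Finset ℕ) (pos : ℕ → ℕ) (coef : ℕ → ℕ),
        (∀ β ∈ T, pos β ∈ Finset.Icc 1 m) →
        (∑ β ∈ T, ((coef β : ℕ) : ZMod q) * ((dig p (r' j) (pos β) : ℕ) : ZMod q))
          - ∑ β ∈ T, ((coef β : ℕ) : ZMod q) * ((dig p (s' j) (pos β) : ℕ) : ZMod q)
        = (∑ β ∈ T, ((coef β : ℕ) : ZMod q) * ((dig p r (pos β) : ℕ) : ZMod q))
          - ∑ β ∈ T, ((coef β : ℕ) : ZMod q) * ((dig p s (pos β) : ℕ) : ZMod q) := by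
      intro T pos coef hpos
      rw [← Finset.sum_sub_distrib, ← Finset.sum_sub_distrib]
      exact Finset.sum_congr rfl fun β hβ => by
        rw [← mul_sub, ← mul_sub, digdiff _ (hpos β hβ)]
    have hfix_r : ∀ (T : Finset ℕ) (pos : ℕ → ℕ) (coef : ℕ → ℕ),
        (∀ β ∈ T, pos β ∈ Finset.Icc 1 m) → (∀ β ∈ T, pos β ≠ l0) →
        (∑ β ∈ T, ((coef β : ℕ) : ZMod q) * ((dig p (r' j) (pos β) : ℕ) : ZMod q))
          = ∑ β ∈ T, ((coef β : ℕ) : ZMod q) * ((dig p r (pos β) : ℕ) : ZMod q) :=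
      fun T pos coef h1 h2 => Finset.sum_congr rfl fun β hβ => by
        rw [hrdig _ (h1 β hβ) (h2 β hβ)]
    have hfix_s : ∀ (T : Finset ℕ) (pos : ℕ → ℕ) (coef : ℕ → ℕ),
        (∀ β ∈ T, pos β ∈ Finset.Icc 1 m) → (∀ β ∈ T, pos β ≠ l0) →
        (∑ β ∈ T, ((coef β : ℕ) : ZMod q) * ((dig p (s' j) (pos β) : ℕ) : ZMod q))
          = ∑ β ∈ T, ((coef β : ℕ) : ZMod q) * ((dig p s (pos β) : ℕ) : ZMod q) :=
      fun T pos coef h1 h2 => Finset.sum_congr rfl fun β hβ => by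
        rw [hsdig _ (h1 β hβ) (h2 β hβ)]
    have hpos1 : ∀ β ∈ Finset.Icc 1 k, pmap β 1 ∈ Finset.Icc 1 m :=
      fun β hβ => hsub (hmaps β hβ 1 (Finset.mem_Icc.mpr ⟨le_refl 1, hmcard β hβ⟩))
    have hpos2 : ∀ β ∈ Finset.Icc 1 k, pmap β (mcard β) ∈ Finset.Icc 1 m :=
      fun β hβ => hsub (hmaps β hβ (mcard β) (Finset.mem_Icc.mpr ⟨hmcard β hβ, le_refl _⟩))
    have hpos2ne : ∀ β ∈ Finset.Icc 1 k, pmap β (mcard β) ≠ l0 := by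
      intro β hβ h
      have h2 := (uniq β hβ (mcard β) (Finset.mem_Icc.mpr ⟨hmcard β hβ, le_refl _⟩) h)
      have := h2.1
      subst this
      omega
    have hpos3 : ∀ β ∈ Finset.Icc 1 δ, m - δ + β ∈ Finset.Icc 1 m := by
      intro β hβ
      have := Finset.mem_Icc.mp hβ
      exact Finset.mem_Icc.mpr ⟨by omega, by omega⟩
    have hpos3ne : ∀ β ∈ Finset.Icc 1 δ, m - δ + β ≠ l0 := by
      intro β hβ
      have := Finset.mem_Icc.mp hβ
      omega
    -- boundary casts
    have cast_bound : ∀ t u : ℕ,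
        (((q / p) * (∑ β ∈ Finset.Icc 1 k, dig p σ β * dig p u (pmap β 1)
          + ∑ β ∈ Finset.Icc 1 k, dig p t β * dig p u (pmap β (mcard β))
          + ∑ β ∈ Finset.Icc 1 δ, dig p t (k + β) * dig p u (m - δ + β)) : ℕ) : ZMod q)
        = c0 * ((∑ β ∈ Finset.Icc 1 k, ((dig p σ β : ℕ) : ZMod q) * ((dig p u (pmap β 1) : ℕ) : ZMod q))
          + (∑ β ∈ Finset.Icc 1 k, ((dig p t β : ℕ) : ZMod q) * ((dig p u (pmap β (mcard β)) : ℕ) : ZMod q))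
          + (∑ β ∈ Finset.Icc 1 δ, ((dig p t (k + β) : ℕ) : ZMod q) * ((dig p u (m - δ + β) : ℕ) : ZMod q))) := by
      intro t u
      rw [hc0]
      push_cast
      ring
    have hB : (((q / p) * (∑ β ∈ Finset.Icc 1 k, dig p σ β * dig p (r' j) (pmap β 1)
          + ∑ β ∈ Finset.Icc 1 k, dig p t₁ β * dig p (r' j) (pmap β (mcard β))
          + ∑ β ∈ Finset.Icc 1 δ, dig p t₁ (k + β) * dig p (r' j) (m - δ + β)) : ℕ) : ZMod q)
        - (((q / p) * (∑ β ∈ Finset.Icc 1 k, dig p σ β * dig p (s' j) (pmap β 1)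
          + ∑ β ∈ Finset.Icc 1 k, dig p t₂ β * dig p (s' j) (pmap β (mcard β))
          + ∑ β ∈ Finset.Icc 1 δ, dig p t₂ (k + β) * dig p (s' j) (m - δ + β)) : ℕ) : ZMod q)
        = (((q / p) * (∑ β ∈ Finset.Icc 1 k, dig p σ β * dig p r (pmap β 1)
          + ∑ β ∈ Finset.Icc 1 k, dig p t₁ β * dig p r (pmap β (mcard β))
          + ∑ β ∈ Finset.Icc 1 δ, dig p t₁ (k + β) * dig p r (m - δ + β)) : ℕ) : ZMod q)
        - (((q / p) * (∑ β ∈ Finset.Icc 1 k, dig p σ β * dig p s (pmap β 1)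
          + ∑ β ∈ Finset.Icc 1 k, dig p t₂ β * dig p s (pmap β (mcard β))
          + ∑ β ∈ Finset.Icc 1 δ, dig p t₂ (k + β) * dig p s (m - δ + β)) : ℕ) : ZMod q) := by
      rw [cast_bound t₁ (r' j), cast_bound t₂ (s' j), cast_bound t₁ r, cast_bound t₂ s]
      have g1 := hgen (Finset.Icc 1 k) (fun β => pmap β 1) (dig p σ) hpos1
      have g2r := hfix_r (Finset.Icc 1 k) (fun β => pmap β (mcard β)) (dig p t₁) hpos2 hpos2ne
      have g2s := hfix_s (Finset.Icc 1 k) (fun β => pmap β (mcard β)) (dig p t₂) hpos2 hpos2ne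
      have g3r := hfix_r (Finset.Icc 1 δ) (fun β => m - δ + β) (fun β => dig p t₁ (k + β)) hpos3 hpos3ne
      have g3s := hfix_s (Finset.Icc 1 δ) (fun β => m - δ + β) (fun β => dig p t₂ (k + β)) hpos3 hpos3ne
      linear_combination c0 * g1 + c0 * g2r - c0 * g2s + c0 * g3r - c0 * g3s
    -- quadratic part
    set F : ℕ → ℕ → ZMod q := fun β γ =>
      c0 * (((dig p (r' j) (pmap β γ) : ℕ) : ZMod q) * ((dig p (r' j) (pmap β (γ + 1)) : ℕ) : ZMod q))
      - c0 * (((dig p (s' j) (pmap β γ) : ℕ) : ZMod q) * ((dig p (s' j) (pmap β (γ + 1)) : ℕ) : ZMod q))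
      with hF
    set G : ℕ → ℕ → ZMod q := fun β γ =>
      c0 * (((dig p r (pmap β γ) : ℕ) : ZMod q) * ((dig p r (pmap β (γ + 1)) : ℕ) : ZMod q))
      - c0 * (((dig p s (pmap β γ) : ℕ) : ZMod q) * ((dig p s (pmap β (γ + 1)) : ℕ) : ZMod q))
      with hG
    have hFG : ∀ β ∈ Finset.Icc 1 k, ∀ γ ∈ Finset.Icc 1 (mcard β - 1),
        ¬(β = b ∧ γ = c - 1) → F β γ = G β γ := by
      intro β hβ γ hγ hne'
      obtain ⟨hγ1, hγ2⟩ := Finset.mem_Icc.mp hγ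
      have hγmem : γ ∈ Finset.Icc 1 (mcard β) := Finset.mem_Icc.mpr ⟨hγ1, by omega⟩
      have hγ1mem : γ + 1 ∈ Finset.Icc 1 (mcard β) := Finset.mem_Icc.mpr ⟨by omega, by omega⟩
      have hm1 : pmap β γ ∈ Finset.Icc 1 m := hsub (hmaps β hβ γ hγmem)
      have hm2 : pmap β (γ + 1) ∈ Finset.Icc 1 m := hsub (hmaps β hβ (γ + 1) hγ1mem)
      have h1 : pmap β γ ≠ l0 := fun h => hne' (uniq β hβ γ hγmem h)
      by_cases h2 : pmap β (γ + 1) = l0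
      · obtain ⟨e1, e2⟩ := uniq β hβ (γ + 1) hγ1mem h2
        subst e1
        have heq2 : dig p r (pmap β γ) = dig p s (pmap β γ) := heq γ hγ1 (by omega)
        simp only [hF, hG]
        rw [hrdig _ hm1 h1, hsdig _ hm1 h1, h2, hrl0, hsl0, heq2, hequ]
        ring
      · simp only [hF, hG]
        rw [hrdig _ hm1 h1, hsdig _ hm1 h1, hrdig _ hm2 h2, hsdig _ hm2 h2]
    have hcm1 : c - 1 ∈ Finset.Icc 1 (mcard b - 1) := Finset.mem_Icc.mpr ⟨by omega, by omega⟩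
    have hmain : F b (c - 1) = G b (c - 1) + c0 * (((p - j : ℕ)) : ZMod q) * (R - S) := by
      have e1 : c - 1 + 1 = c := by omega
      simp only [hF, hG, e1]
      rw [← hl0, hrl0, hsl0, hrdig _ hpcmem hpc_ne, hsdig _ hpcmem hpc_ne, ← hR, ← hS]
      linear_combination (R - S) * hkey - c0 * S * hequc
    have H : (∑ β ∈ Finset.Icc 1 k, ∑ γ ∈ Finset.Icc 1 (mcard β - 1), F β γ)
        = (∑ β ∈ Finset.Icc 1 k, ∑ γ ∈ Finset.Icc 1 (mcard β - 1), G β γ)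
          + c0 * (((p - j : ℕ)) : ZMod q) * (R - S) := by
      have eF : (∑ β ∈ Finset.Icc 1 k, ∑ γ ∈ Finset.Icc 1 (mcard β - 1), F β γ)
          = F b (c - 1) + ((∑ γ ∈ (Finset.Icc 1 (mcard b - 1)).erase (c - 1), F b γ)
            + ∑ β ∈ (Finset.Icc 1 k).erase b, ∑ γ ∈ Finset.Icc 1 (mcard β - 1), F β γ) := by
        rw [← Finset.add_sum_erase _ (fun β => ∑ γ ∈ Finset.Icc 1 (mcard β - 1), F β γ) hb,
          ← Finset.add_sum_erase _ (F b) hcm1, add_assoc]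
      have eG : (∑ β ∈ Finset.Icc 1 k, ∑ γ ∈ Finset.Icc 1 (mcard β - 1), G β γ)
          = G b (c - 1) + ((∑ γ ∈ (Finset.Icc 1 (mcard b - 1)).erase (c - 1), G b γ)
            + ∑ β ∈ (Finset.Icc 1 k).erase b, ∑ γ ∈ Finset.Icc 1 (mcard β - 1), G β γ) := by
        rw [← Finset.add_sum_erase _ (fun β => ∑ γ ∈ Finset.Icc 1 (mcard β - 1), G β γ) hb,
          ← Finset.add_sum_erase _ (G b) hcm1, add_assoc]
      have e1 : (∑ γ ∈ (Finset.Icc 1 (mcard b - 1)).erase (c - 1), F b γ)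
          = ∑ γ ∈ (Finset.Icc 1 (mcard b - 1)).erase (c - 1), G b γ :=
        Finset.sum_congr rfl fun γ hγ => by
          obtain ⟨hne'', hγm⟩ := Finset.mem_erase.mp hγ
          exact hFG b hb γ hγm (fun h => hne'' h.2)
      have e2 : (∑ β ∈ (Finset.Icc 1 k).erase b, ∑ γ ∈ Finset.Icc 1 (mcard β - 1), F β γ)
          = ∑ β ∈ (Finset.Icc 1 k).erase b, ∑ γ ∈ Finset.Icc 1 (mcard β - 1), G β γ :=
        Finset.sum_congr rfl fun β hβ => Finset.sum_congr rfl fun γ hγ =>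
          hFG β (Finset.mem_of_mem_erase hβ) γ hγ
            (fun h => (Finset.mem_erase.mp hβ).1 h.1)
      rw [eF, eG, hmain, e1, e2]
      ring
    have cast_quad : ∀ u : ℕ,
        (((q / p) * ∑ β ∈ Finset.Icc 1 k, ∑ γ ∈ Finset.Icc 1 (mcard β - 1),
            dig p u (pmap β γ) * dig p u (pmap β (γ + 1)) : ℕ) : ZMod q)
          = ∑ β ∈ Finset.Icc 1 k, ∑ γ ∈ Finset.Icc 1 (mcard β - 1),
              c0 * (((dig p u (pmap β γ) : ℕ) : ZMod q) * ((dig p u (pmap β (γ + 1)) : ℕ) : ZMod q)) := by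
      intro u
      rw [hc0]
      push_cast
      rw [Finset.mul_sum]
      exact Finset.sum_congr rfl fun β _ => by rw [Finset.mul_sum]
    have hQ : (((q / p) * ∑ β ∈ Finset.Icc 1 k, ∑ γ ∈ Finset.Icc 1 (mcard β - 1),
            dig p (r' j) (pmap β γ) * dig p (r' j) (pmap β (γ + 1)) : ℕ) : ZMod q)
        - (((q / p) * ∑ β ∈ Finset.Icc 1 k, ∑ γ ∈ Finset.Icc 1 (mcard β - 1),
            dig p (s' j) (pmap β γ) * dig p (s' j) (pmap β (γ + 1)) : ℕ) : ZMod q)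
        = (((q / p) * ∑ β ∈ Finset.Icc 1 k, ∑ γ ∈ Finset.Icc 1 (mcard β - 1),
            dig p r (pmap β γ) * dig p r (pmap β (γ + 1)) : ℕ) : ZMod q)
        - (((q / p) * ∑ β ∈ Finset.Icc 1 k, ∑ γ ∈ Finset.Icc 1 (mcard β - 1),
            dig p s (pmap β γ) * dig p s (pmap β (γ + 1)) : ℕ) : ZMod q)
          + c0 * (((p - j : ℕ)) : ZMod q) * (R - S) := by
      rw [cast_quad (r' j), cast_quad (s' j), cast_quad r, cast_quad s]
      have H' := H
      simp only [hF, hG, Finset.sum_sub_distrib] at H'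
      linear_combination H'
    -- assemble
    simp only [aseq]
    rw [nsmul_eq_mul, hE]
    linear_combination hQ + hL + hB
  -- final assembly
  have hz1 : eomega q E ^ p = 1 := by
    rw [← eomega_nsmul hq]
    have hzero : p • E = 0 := by
      rw [nsmul_eq_mul, hE, hc0, ← mul_assoc, ← Nat.cast_mul,
        Nat.mul_div_cancel' hpq, ZMod.natCast_self, zero_mul]
    rw [hzero, eomega_zero hq]
  have hzne : eomega q E ≠ 1 := eomega_ne_one hq hEne
  have hsummand : ∀ j ∈ Finset.Icc 1 (p - 1),
      eomega q (aseq p q m δ k mcard pmap lam t₁ σ (r' j)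
        - aseq p q m δ k mcard pmap lam t₂ σ (s' j))
      = eomega q (aseq p q m δ k mcard pmap lam t₁ σ r
          - aseq p q m δ k mcard pmap lam t₂ σ s) * eomega q E ^ (p - j) := by
    intro j hj
    rw [key j hj, eomega_add hq, eomega_nsmul hq]
  rw [Finset.sum_congr rfl hsummand, ← Finset.mul_sum, ← mul_one_add]
  have hre : ∑ j ∈ Finset.Icc 1 (p - 1), eomega q E ^ (p - j)
      = ∑ i ∈ Finset.Icc 1 (p - 1), eomega q E ^ i := by
    apply Finset.sum_nbij' (fun j => p - j) (fun j => p - j)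
    · intro a ha
      have := Finset.mem_Icc.mp ha
      exact Finset.mem_Icc.mpr ⟨by omega, by omega⟩
    · intro a ha
      have := Finset.mem_Icc.mp ha
      exact Finset.mem_Icc.mpr ⟨by omega, by omega⟩
    · intro a ha
      have := Finset.mem_Icc.mp ha
      omega
    · intro a ha
      have := Finset.mem_Icc.mp ha
      omega
    · intro a ha
      rfl
  have hrange : ∑ i ∈ Finset.range p, eomega q E ^ i
      = 1 + ∑ i ∈ Finset.Icc 1 (p - 1), eomega q E ^ i := by
    have h0 : Finset.range p = Finset.Icc 0 (p - 1) := by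
      rw [Finset.range_eq_Ico, ← Finset.Ico_add_one_right_eq_Icc]
      congr 1
      omega
    rw [h0, ← Finset.add_sum_erase _ _ (Finset.mem_Icc.mpr ⟨le_refl 0, Nat.zero_le _⟩), pow_zero]
    congr 1
  have hgeo : ∑ i ∈ Finset.range p, eomega q E ^ i = 0 := by
    rw [geom_sum_eq hzne, hz1, sub_self, zero_div]
  rw [hre, ← hrange, hgeo, mul_zero]
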